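/- For nonempty compact metric spaces (X,d), (X',d') equipped with nonempty compact subsets C_1, …, C_k ⊆ X and C_1', …, C_k' ⊆ X', the k-marked Gromov–Hausdorff distance admits the characterization: d_GH^k((X,d,(C_1,…,C_k)),(X',d',(C_1',…,C_k'))) = (1/2) · inf{dis ℛ : ℛ a compact correspondence between X and X' such that for every 1 ≤ i ≤ k the set ℛ ∩ (C_i × C_i') is a correspondence between C_i and C_i'}. -/
import Mathlib


open Set

section MarkedGH

variable {X Y : Type*}

/-- A "glue metric": a metric on the disjoint union `X ⊕ Y` whose restrictions to `X`
and `Y` coincide with the given metrics. -/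
structure IsGlueMetric [MetricSpace X] [MetricSpace Y] (δ : X ⊕ Y → X ⊕ Y → ℝ) : Prop where
  refl : ∀ a, δ a a = 0
  pos : ∀ a b, a ≠ b → 0 < δ a b
  symm : ∀ a b, δ a b = δ b a
  triangle : ∀ a b c, δ a c ≤ δ a b + δ b c
  restr_left : ∀ x x' : X, δ (Sum.inl x) (Sum.inl x') = dist x x'
  restr_right : ∀ y y' : Y, δ (Sum.inr y) (Sum.inr y') = dist y y'

/-- The Hausdorff distance in `(X ⊕ Y, δ)` between (the images of) `A ⊆ X` and
`B ⊆ Y`: the infimum of `ε > 0` such that each set is contained in the open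
`ε`-neighborhood of the other. -/
noncomputable def glueHausdorffDist (δ : X ⊕ Y → X ⊕ Y → ℝ) (A : Set X) (B : Set Y) : ℝ :=
  sInf {ε : ℝ | 0 < ε ∧ (∀ x ∈ A, ∃ y ∈ B, δ (Sum.inl x) (Sum.inr y) < ε) ∧
    (∀ y ∈ B, ∃ x ∈ A, δ (Sum.inl x) (Sum.inr y) < ε)}

/-- The `k`-marked Gromov–Hausdorff distance between `(X, (C_i))` and `(Y, (C'_i))`. -/
noncomputable def markedGHDist [MetricSpace X] [MetricSpace Y] (k : ℕ)
    (C : Fin k → Set X) (C' : Fin k → Set Y) : ℝ :=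
  sInf {r : ℝ | ∃ δ : X ⊕ Y → X ⊕ Y → ℝ, IsGlueMetric δ ∧
    r = max (glueHausdorffDist δ Set.univ Set.univ)
      (⨆ i : Fin k, glueHausdorffDist δ (C i) (C' i))}

/-- A correspondence between `X` and `Y`. -/
def IsCorrespondence (R : Set (X × Y)) : Prop :=
  (∀ x : X, ∃ y : Y, (x, y) ∈ R) ∧ (∀ y : Y, ∃ x : X, (x, y) ∈ R)

/-- The distortion of a correspondence. -/
noncomputable def distortion [MetricSpace X] [MetricSpace Y] (R : Set (X × Y)) : ℝ :=
  sSup {r : ℝ | ∃ p ∈ R, ∃ q ∈ R, r = |dist p.1 q.1 - dist p.2 q.2|}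

end MarkedGH

section Aux

variable {X Y : Type*} [MetricSpace X] [MetricSpace Y]

/-- The cross-distance function built from a correspondence `R` and a constant `c`. -/
noncomputable def glueF (R : Set (X × Y)) (c : ℝ) (x : X) (y : Y) : ℝ :=
  sInf ((fun p : X × Y => dist x p.1 + c + dist p.2 y) '' R)

variable {R : Set (X × Y)} {c : ℝ}

lemma glueF_bddBelow (x : X) (y : Y) :
    BddBelow ((fun p : X × Y => dist x p.1 + c + dist p.2 y) '' R) := by
  refine ⟨c, ?_⟩
  rintro s ⟨p, -, rfl⟩
  have := dist_nonneg (x := x) (y := p.1)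
  have := dist_nonneg (x := p.2) (y := y)
  dsimp; linarith

lemma le_glueF (hRne : R.Nonempty) (x : X) (y : Y) : c ≤ glueF R c x y :=
  le_csInf (hRne.image _) (by rintro s ⟨p, -, rfl⟩
                              have := dist_nonneg (x := x) (y := p.1)
                              have := dist_nonneg (x := p.2) (y := y)
                              dsimp; linarith)

lemma glueF_le {p : X × Y} (hp : p ∈ R) (x : X) (y : Y) :
    glueF R c x y ≤ dist x p.1 + c + dist p.2 y :=
  csInf_le (glueF_bddBelow x y) ⟨p, hp, rfl⟩

lemma glueF_le_add_left (hRne : R.Nonempty) (x x' : X) (y : Y) :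
    glueF R c x y ≤ dist x x' + glueF R c x' y := by
  rw [← sub_le_iff_le_add']
  refine le_csInf (hRne.image _) ?_
  rintro s ⟨p, hp, rfl⟩
  have h1 := glueF_le (c := c) hp x y
  have h2 := dist_triangle x x' p.1
  dsimp; linarith

lemma glueF_le_add_right (hRne : R.Nonempty) (x : X) (y y' : Y) :
    glueF R c x y ≤ glueF R c x y' + dist y' y := by
  rw [← sub_le_iff_le_add]
  refine le_csInf (hRne.image _) ?_
  rintro s ⟨p, hp, rfl⟩
  have h1 := glueF_le (c := c) hp x y
  have h2 := dist_triangle p.2 y' y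
  dsimp; linarith

variable (hdis : ∀ p ∈ R, ∀ q ∈ R, |dist p.1 q.1 - dist p.2 q.2| ≤ 2 * c)
include hdis

lemma dist_le_glueF_add (hRne : R.Nonempty) (x x' : X) (y : Y) :
    dist x x' ≤ glueF R c x y + glueF R c x' y := by
  rw [← sub_le_iff_le_add']
  refine le_csInf ?ne ?bd
  case ne =>
    exact hRne.image _
  case bd =>
    rintro s ⟨p, hp, rfl⟩
    rw [sub_le_iff_le_add, add_comm, ← sub_le_iff_le_add]
    refine le_csInf ?ne2 ?bd2
    case ne2 => exact hRne.image _
    case bd2 =>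
      rintro t ⟨q, hq, rfl⟩
      have h1 := (abs_le.1 (hdis q hq p hp)).2
      have h2 := dist_triangle x q.1 x'
      have h3 := dist_triangle q.1 p.1 x'
      have h4 := dist_triangle q.2 y p.2
      have h5 : dist y p.2 = dist p.2 y := dist_comm _ _
      have h6 : dist q.1 p.1 = dist p.1 q.1 := dist_comm _ _
      have h7 : dist p.1 x' = dist x' p.1 := dist_comm _ _
      have h8 : dist q.2 y = dist y q.2 := dist_comm _ _
      dsimp; linarith

lemma dist_le_glueF_add' (hRne : R.Nonempty) (x : X) (y y' : Y) :
    dist y y' ≤ glueF R c x y + glueF R c x y' := by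
  rw [← sub_le_iff_le_add']
  refine le_csInf ?ne ?bd
  case ne => exact hRne.image _
  case bd =>
    rintro s ⟨p, hp, rfl⟩
    rw [sub_le_iff_le_add, add_comm, ← sub_le_iff_le_add]
    refine le_csInf ?ne2 ?bd2
    case ne2 => exact hRne.image _
    case bd2 =>
      rintro t ⟨q, hq, rfl⟩
      have h1 := (abs_le.1 (hdis q hq p hp)).1
      have h2 := dist_triangle y q.2 y'
      have h3 := dist_triangle q.2 p.2 y'
      have h4 := dist_triangle q.1 x p.1
      have h5 : dist q.2 y = dist y q.2 := dist_comm _ _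
      have h6 : dist q.1 x = dist x q.1 := dist_comm _ _
      dsimp; linarith

end Aux

section Glue

variable {X Y : Type*} [MetricSpace X] [MetricSpace Y]

/-- The glue metric built from a correspondence. -/
noncomputable def glueδ (R : Set (X × Y)) (c : ℝ) : X ⊕ Y → X ⊕ Y → ℝ
  | .inl x, .inl x' => dist x x'
  | .inl x, .inr y => glueF R c x y
  | .inr y, .inl x => glueF R c x y
  | .inr y, .inr y' => dist y y'

variable {R : Set (X × Y)} {c : ℝ}

lemma isGlueMetric_glueδ (hRne : R.Nonempty) (hc : 0 < c)
    (hdis : ∀ p ∈ R, ∀ q ∈ R, |dist p.1 q.1 - dist p.2 q.2| ≤ 2 * c) :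
    IsGlueMetric (glueδ R c) where
  refl a := by cases a <;> simp [glueδ]
  pos a b hab := by
    rcases a with x | y <;> rcases b with x' | y'
    · exact dist_pos.2 (fun h => hab (by rw [h]))
    · exact lt_of_lt_of_le hc (le_glueF hRne _ _)
    · exact lt_of_lt_of_le hc (le_glueF hRne _ _)
    · exact dist_pos.2 (fun h => hab (by rw [h]))
  symm a b := by
    rcases a with x | y <;> rcases b with x' | y' <;> simp [glueδ, dist_comm]
  triangle a b c' := by
    rcases a with x | y <;> rcases b with x' | y' <;> rcases c' with x'' | y'' <;>
      simp only [glueδ]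
    · exact dist_triangle _ _ _
    · exact glueF_le_add_left hRne _ _ _
    · exact dist_le_glueF_add hdis hRne _ _ _
    · exact glueF_le_add_right hRne _ _ _
    · calc glueF R c x'' y ≤ dist x'' x' + glueF R c x' y := glueF_le_add_left hRne _ _ _
        _ = glueF R c x' y + dist x' x'' := by rw [dist_comm]; ring
    · exact dist_le_glueF_add' hdis hRne _ _ _
    · calc glueF R c x'' y ≤ glueF R c x'' y' + dist y' y := glueF_le_add_right hRne _ _ _
        _ = dist y y' + glueF R c x'' y' := by rw [dist_comm]; ring
    · exact dist_triangle _ _ _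
  restr_left x x' := rfl
  restr_right y y' := rfl

lemma glueHausdorffDist_nonneg (δ : X ⊕ Y → X ⊕ Y → ℝ) (A : Set X) (B : Set Y) :
    0 ≤ glueHausdorffDist δ A B :=
  Real.sInf_nonneg (fun _ h => h.1.le)

lemma glueHausdorffDist_le {δ : X ⊕ Y → X ⊕ Y → ℝ} {A : Set X} {B : Set Y} {c : ℝ}
    (hc : 0 < c)
    (hA : ∀ x ∈ A, ∃ y ∈ B, δ (Sum.inl x) (Sum.inr y) ≤ c)
    (hB : ∀ y ∈ B, ∃ x ∈ A, δ (Sum.inl x) (Sum.inr y) ≤ c) :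
    glueHausdorffDist δ A B ≤ c := by
  refine le_of_forall_pos_le_add (fun ε hε => ?_)
  refine csInf_le ⟨0, fun s hs => hs.1.le⟩ ?_
  refine ⟨by linarith, fun x hx => ?_, fun y hy => ?_⟩
  · obtain ⟨y, hy, h⟩ := hA x hx
    exact ⟨y, hy, by linarith⟩
  · obtain ⟨x, hx, h⟩ := hB y hy
    exact ⟨x, hx, by linarith⟩

end Glue



section Main

variable {X Y : Type*} [MetricSpace X] [MetricSpace Y]

lemma exists_glue [Nonempty X] {k : ℕ} {C : Fin k → Set X} {C' : Fin k → Set Y}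
    {R : Set (X × Y)} (hR : IsCorrespondence R)
    (hmk : ∀ i, (∀ x ∈ C i, ∃ y ∈ C' i, (x, y) ∈ R) ∧ (∀ y ∈ C' i, ∃ x ∈ C i, (x, y) ∈ R))
    {c : ℝ} (hc : 0 < c)
    (hdis : ∀ p ∈ R, ∀ q ∈ R, |dist p.1 q.1 - dist p.2 q.2| ≤ 2 * c) :
    ∃ δ : X ⊕ Y → X ⊕ Y → ℝ, IsGlueMetric δ ∧
      max (glueHausdorffDist δ Set.univ Set.univ)
        (⨆ i : Fin k, glueHausdorffDist δ (C i) (C' i)) ≤ c := by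
  have hRne : R.Nonempty := by
    obtain ⟨y, hy⟩ := hR.1 (Classical.arbitrary X)
    exact ⟨_, hy⟩
  have key : ∀ (x : X) (y : Y), (x, y) ∈ R → glueδ R c (Sum.inl x) (Sum.inr y) ≤ c := by
    intro x y hxy
    have := glueF_le (c := c) hxy x y
    simpa [glueδ] using this
  refine ⟨glueδ R c, isGlueMetric_glueδ hRne hc hdis,
    max_le ?_ (Real.iSup_le (fun i => ?_) hc.le)⟩
  · refine glueHausdorffDist_le hc (fun x _ => ?_) (fun y _ => ?_)
    · obtain ⟨y, hy⟩ := hR.1 x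
      exact ⟨y, mem_univ _, key x y hy⟩
    · obtain ⟨x, hx⟩ := hR.2 y
      exact ⟨x, mem_univ _, key x y hx⟩
  · refine glueHausdorffDist_le hc (fun x hx => ?_) (fun y hy => ?_)
    · obtain ⟨y, hy, hxy⟩ := (hmk i).1 x hx
      exact ⟨y, hy, key x y hxy⟩
    · obtain ⟨x, hx, hxy⟩ := (hmk i).2 y hy
      exact ⟨x, hx, key x y hxy⟩

lemma glue_nonneg {δ : X ⊕ Y → X ⊕ Y → ℝ} (hδ : IsGlueMetric δ) (a b : X ⊕ Y) :
    0 ≤ δ a b := by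
  have h1 := hδ.triangle a b a
  have h2 := hδ.refl a
  have h3 := hδ.symm a b
  linarith

/-- The admissible set for the Hausdorff distance is nonempty when both sets are. -/
lemma adm_nonempty [CompactSpace X] [CompactSpace Y]
    {δ : X ⊕ Y → X ⊕ Y → ℝ} (hδ : IsGlueMetric δ) {A : Set X} {B : Set Y}
    (hA : A.Nonempty) (hB : B.Nonempty) :
    {ε : ℝ | 0 < ε ∧ (∀ x ∈ A, ∃ y ∈ B, δ (Sum.inl x) (Sum.inr y) < ε) ∧
      (∀ y ∈ B, ∃ x ∈ A, δ (Sum.inl x) (Sum.inr y) < ε)}.Nonempty := by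
  obtain ⟨x0, hx0⟩ := hA
  obtain ⟨y0, hy0⟩ := hB
  set dX := Metric.diam (Set.univ : Set X) with hdX
  set dY := Metric.diam (Set.univ : Set Y) with hdY
  have hdX0 : 0 ≤ dX := Metric.diam_nonneg
  have hdY0 : 0 ≤ dY := Metric.diam_nonneg
  have hδ0 : 0 ≤ δ (Sum.inl x0) (Sum.inr y0) := glue_nonneg hδ _ _
  refine ⟨dX + δ (Sum.inl x0) (Sum.inr y0) + dY + 1, by linarith, fun x _ => ⟨y0, hy0, ?_⟩,
    fun y hy => ⟨x0, hx0, ?_⟩⟩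
  · have h1 := hδ.triangle (Sum.inl x) (Sum.inl x0) (Sum.inr y0)
    rw [hδ.restr_left] at h1
    have h2 : dist x x0 ≤ dX :=
      Metric.dist_le_diam_of_mem isCompact_univ.isBounded (mem_univ _) (mem_univ _)
    linarith
  · have h1 := hδ.triangle (Sum.inl x0) (Sum.inr y0) (Sum.inr y)
    rw [hδ.restr_right] at h1
    have h2 : dist y0 y ≤ dY :=
      Metric.dist_le_diam_of_mem isCompact_univ.isBounded (mem_univ _) (mem_univ _)
    linarith

lemma adm_mem {δ : X ⊕ Y → X ⊕ Y → ℝ} {A : Set X} {B : Set Y} {ε : ℝ}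
    (hne : {ε : ℝ | 0 < ε ∧ (∀ x ∈ A, ∃ y ∈ B, δ (Sum.inl x) (Sum.inr y) < ε) ∧
      (∀ y ∈ B, ∃ x ∈ A, δ (Sum.inl x) (Sum.inr y) < ε)}.Nonempty)
    (h : glueHausdorffDist δ A B < ε) :
    0 < ε ∧ (∀ x ∈ A, ∃ y ∈ B, δ (Sum.inl x) (Sum.inr y) < ε) ∧
      (∀ y ∈ B, ∃ x ∈ A, δ (Sum.inl x) (Sum.inr y) < ε) := by
  rw [glueHausdorffDist] at h
  obtain ⟨s, ⟨hs0, hsA, hsB⟩, hslt⟩ :=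
    (csInf_lt_iff ⟨0, fun t ht => ht.1.le⟩ hne).1 h
  refine ⟨hs0.trans hslt, fun x hx => ?_, fun y hy => ?_⟩
  · obtain ⟨y, hy, hlt⟩ := hsA x hx
    exact ⟨y, hy, hlt.trans hslt⟩
  · obtain ⟨x, hx, hlt⟩ := hsB y hy
    exact ⟨x, hx, hlt.trans hslt⟩

end Main

/-- Characterization of the `k`-marked Gromov–Hausdorff distance via compact
correspondences respecting the marked compact sets. -/
theorem markedGHDist_eq_inf_correspondence
    {X Y : Type*} [MetricSpace X] [MetricSpace Y]
    [CompactSpace X] [CompactSpace Y] [Nonempty X] [Nonempty Y]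
    (k : ℕ) (C : Fin k → Set X) (C' : Fin k → Set Y)
    (hC : ∀ i, IsCompact (C i) ∧ (C i).Nonempty)
    (hC' : ∀ i, IsCompact (C' i) ∧ (C' i).Nonempty) :
    markedGHDist k C C' =
      (1 / 2 : ℝ) * sInf {r : ℝ | ∃ R : Set (X × Y), IsCompact R ∧ IsCorrespondence R ∧
        (∀ i, (∀ x ∈ C i, ∃ y ∈ C' i, (x, y) ∈ R) ∧ (∀ y ∈ C' i, ∃ x ∈ C i, (x, y) ∈ R)) ∧
        r = distortion R} := by
  classical
  set S := {r : ℝ | ∃ R : Set (X × Y), IsCompact R ∧ IsCorrespondence R ∧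
      (∀ i, (∀ x ∈ C i, ∃ y ∈ C' i, (x, y) ∈ R) ∧ (∀ y ∈ C' i, ∃ x ∈ C i, (x, y) ∈ R)) ∧
      r = distortion R} with hS
  -- basic facts about distortion
  have hdistnn : ∀ R : Set (X × Y), 0 ≤ distortion R := fun R =>
    Real.sSup_nonneg (by rintro r ⟨p, -, q, -, rfl⟩; exact abs_nonneg _)
  have hSlb : ∀ r ∈ S, (0 : ℝ) ≤ r := by
    rintro r ⟨R, -, -, -, rfl⟩; exact hdistnn R
  have hbddAbove : ∀ R : Set (X × Y),
      BddAbove {r : ℝ | ∃ p ∈ R, ∃ q ∈ R, r = |dist p.1 q.1 - dist p.2 q.2|} := by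
    intro R
    refine ⟨Metric.diam (Set.univ : Set X) + Metric.diam (Set.univ : Set Y), ?_⟩
    rintro r ⟨p, -, q, -, rfl⟩
    have h1 : dist p.1 q.1 ≤ Metric.diam (Set.univ : Set X) :=
      Metric.dist_le_diam_of_mem isCompact_univ.isBounded (mem_univ _) (mem_univ _)
    have h2 : dist p.2 q.2 ≤ Metric.diam (Set.univ : Set Y) :=
      Metric.dist_le_diam_of_mem isCompact_univ.isBounded (mem_univ _) (mem_univ _)
    have h3 := dist_nonneg (x := p.1) (y := q.1)
    have h4 := dist_nonneg (x := p.2) (y := q.2)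
    rw [abs_sub_le_iff]; constructor <;> linarith
  have hdist_le : ∀ (R : Set (X × Y)), ∀ p ∈ R, ∀ q ∈ R,
      |dist p.1 q.1 - dist p.2 q.2| ≤ distortion R := by
    intro R p hp q hq
    exact le_csSup (hbddAbove R) ⟨p, hp, q, hq, rfl⟩
  -- the set S is nonempty, via the full correspondence
  have huniv_corr : IsCorrespondence (Set.univ : Set (X × Y)) :=
    ⟨fun x => ⟨Classical.arbitrary Y, trivial⟩, fun y => ⟨Classical.arbitrary X, trivial⟩⟩
  have huniv_mk : ∀ i, (∀ x ∈ C i, ∃ y ∈ C' i, (x, y) ∈ (Set.univ : Set (X × Y))) ∧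
      (∀ y ∈ C' i, ∃ x ∈ C i, (x, y) ∈ (Set.univ : Set (X × Y))) := by
    intro i
    exact ⟨fun x _ => ⟨(hC' i).2.some, (hC' i).2.some_mem, trivial⟩,
      fun y _ => ⟨(hC i).2.some, (hC i).2.some_mem, trivial⟩⟩
  have hSne : S.Nonempty :=
    ⟨distortion (Set.univ : Set (X × Y)), Set.univ, isCompact_univ, huniv_corr, huniv_mk, rfl⟩
  -- lower bound for the glue-metric set
  have hGlb : ∀ r ∈ {r : ℝ | ∃ δ : X ⊕ Y → X ⊕ Y → ℝ, IsGlueMetric δ ∧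
      r = max (glueHausdorffDist δ Set.univ Set.univ)
        (⨆ i : Fin k, glueHausdorffDist δ (C i) (C' i))}, (0 : ℝ) ≤ r := by
    rintro r ⟨δ, -, rfl⟩
    exact le_trans (glueHausdorffDist_nonneg δ _ _) (le_max_left _ _)
  -- ≤ direction: markedGHDist ≤ r/2 for every r ∈ S
  have hle : ∀ r ∈ S, markedGHDist k C C' ≤ r / 2 := by
    rintro r ⟨R, hRcpt, hRcorr, hmk, rfl⟩
    have hD0 := hdistnn R
    refine le_of_forall_pos_le_add (fun η hη => ?_)
    have hc : 0 < distortion R / 2 + η := by linarith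
    obtain ⟨δ, hδ, hmax⟩ := exists_glue hRcorr hmk hc
      (fun p hp q hq => le_trans (hdist_le R p hp q hq) (by linarith))
    calc markedGHDist k C C' ≤ _ := csInf_le ⟨0, hGlb⟩ ⟨δ, hδ, rfl⟩
      _ ≤ distortion R / 2 + η := hmax
  have hle' : markedGHDist k C C' ≤ 1 / 2 * sInf S := by
    have h2 : 2 * markedGHDist k C C' ≤ sInf S :=
      le_csInf hSne (fun r hr => by linarith [hle r hr])
    linarith
  -- ≥ direction
  have hge : 1 / 2 * sInf S ≤ markedGHDist k C C' := by
    -- the glue-metric set is nonempty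
    have hGne : {r : ℝ | ∃ δ : X ⊕ Y → X ⊕ Y → ℝ, IsGlueMetric δ ∧
        r = max (glueHausdorffDist δ Set.univ Set.univ)
          (⨆ i : Fin k, glueHausdorffDist δ (C i) (C' i))}.Nonempty := by
      have hc : (0 : ℝ) < distortion (Set.univ : Set (X × Y)) / 2 + 1 := by
        linarith [hdistnn (Set.univ : Set (X × Y))]
      obtain ⟨δ, hδ, -⟩ := exists_glue huniv_corr huniv_mk hc
        (fun p hp q hq => le_trans (hdist_le _ p hp q hq) (by linarith))
      exact ⟨_, δ, hδ, rfl⟩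
    refine le_csInf hGne ?_
    rintro r ⟨δ, hδ, rfl⟩
    set m := max (glueHausdorffDist δ Set.univ Set.univ)
      (⨆ i : Fin k, glueHausdorffDist δ (C i) (C' i)) with hm
    have hm0 : 0 ≤ m := le_trans (glueHausdorffDist_nonneg δ _ _) (le_max_left _ _)
    -- continuity of the cross distance
    have hlip : ∀ p q : X × Y,
        |δ (Sum.inl p.1) (Sum.inr p.2) - δ (Sum.inl q.1) (Sum.inr q.2)| ≤
          dist p.1 q.1 + dist p.2 q.2 := by
      intro p q
      rw [abs_sub_le_iff]
      constructor
      · have h1 := hδ.triangle (Sum.inl p.1) (Sum.inl q.1) (Sum.inr p.2)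
        have h2 := hδ.triangle (Sum.inl q.1) (Sum.inr q.2) (Sum.inr p.2)
        rw [hδ.restr_left] at h1
        rw [hδ.restr_right] at h2
        have h3 : dist q.2 p.2 = dist p.2 q.2 := dist_comm _ _
        linarith
      · have h1 := hδ.triangle (Sum.inl q.1) (Sum.inl p.1) (Sum.inr q.2)
        have h2 := hδ.triangle (Sum.inl p.1) (Sum.inr p.2) (Sum.inr q.2)
        rw [hδ.restr_left] at h1
        rw [hδ.restr_right] at h2
        have h3 : dist q.1 p.1 = dist p.1 q.1 := dist_comm _ _
        linarith
    have hcont : Continuous (fun p : X × Y => δ (Sum.inl p.1) (Sum.inr p.2)) := by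
      refine LipschitzWith.continuous (K := 2) (LipschitzWith.of_dist_le_mul fun p q => ?_)
      rw [Real.dist_eq]
      have h1 := hlip p q
      have h2 : dist p.1 q.1 ≤ dist p q := le_trans (le_max_left _ _) (le_of_eq Prod.dist_eq.symm)
      have h3 : dist p.2 q.2 ≤ dist p q := le_trans (le_max_right _ _) (le_of_eq Prod.dist_eq.symm)
      push_cast
      linarith
    -- key: sInf S ≤ 2 * ε for every ε > m
    have key : ∀ ε : ℝ, m < ε → sInf S ≤ 2 * ε := by
      intro ε hε
      set R : Set (X × Y) := {p | δ (Sum.inl p.1) (Sum.inr p.2) ≤ ε} with hRdef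
      have hRcl : IsClosed R := isClosed_le hcont continuous_const
      have hRcpt : IsCompact R := hRcl.isCompact
      have hadm_univ := adm_mem (adm_nonempty hδ ⟨Classical.arbitrary X, mem_univ _⟩
          ⟨Classical.arbitrary Y, mem_univ _⟩)
        (lt_of_le_of_lt (le_max_left _ _ : glueHausdorffDist δ Set.univ Set.univ ≤ m) hε)
      have hadm_i : ∀ i, 0 < ε ∧
          (∀ x ∈ C i, ∃ y ∈ C' i, δ (Sum.inl x) (Sum.inr y) < ε) ∧
          (∀ y ∈ C' i, ∃ x ∈ C i, δ (Sum.inl x) (Sum.inr y) < ε) := by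
        intro i
        refine adm_mem (adm_nonempty hδ (hC i).2 (hC' i).2) (lt_of_le_of_lt ?_ hε)
        refine le_trans ?_ (le_max_right _ _)
        exact le_ciSup (f := fun i => glueHausdorffDist δ (C i) (C' i))
          (Set.finite_range _).bddAbove i
      have hRcorr : IsCorrespondence R := by
        constructor
        · intro x
          obtain ⟨y, -, hlt⟩ := hadm_univ.2.1 x trivial
          exact ⟨y, hlt.le⟩
        · intro y
          obtain ⟨x, -, hlt⟩ := hadm_univ.2.2 y trivial
          exact ⟨x, hlt.le⟩
      have hRmk : ∀ i, (∀ x ∈ C i, ∃ y ∈ C' i, (x, y) ∈ R) ∧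
          (∀ y ∈ C' i, ∃ x ∈ C i, (x, y) ∈ R) := by
        intro i
        constructor
        · intro x hx
          obtain ⟨y, hy, hlt⟩ := (hadm_i i).2.1 x hx
          exact ⟨y, hy, hlt.le⟩
        · intro y hy
          obtain ⟨x, hx, hlt⟩ := (hadm_i i).2.2 y hy
          exact ⟨x, hx, hlt.le⟩
      have hdR : distortion R ≤ 2 * ε := by
        refine Real.sSup_le ?_ (by linarith [hadm_univ.1])
        rintro r ⟨p, hp, q, hq, rfl⟩
        have hgp : δ (Sum.inl p.1) (Sum.inr p.2) ≤ ε := hp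
        have hgq : δ (Sum.inl q.1) (Sum.inr q.2) ≤ ε := hq
        rw [abs_sub_le_iff]
        constructor
        · have h1 := hδ.triangle (Sum.inl p.1) (Sum.inr p.2) (Sum.inl q.1)
          have h2 := hδ.triangle (Sum.inr p.2) (Sum.inr q.2) (Sum.inl q.1)
          rw [hδ.restr_left] at h1
          rw [hδ.restr_right] at h2
          have h3 : δ (Sum.inr q.2) (Sum.inl q.1) = δ (Sum.inl q.1) (Sum.inr q.2) :=
            hδ.symm _ _
          linarith
        · have h1 := hδ.triangle (Sum.inr p.2) (Sum.inl p.1) (Sum.inr q.2)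
          have h2 := hδ.triangle (Sum.inl p.1) (Sum.inl q.1) (Sum.inr q.2)
          rw [hδ.restr_left] at h2
          rw [hδ.restr_right] at h1
          have h3 : δ (Sum.inr p.2) (Sum.inl p.1) = δ (Sum.inl p.1) (Sum.inr p.2) :=
            hδ.symm _ _
          linarith
      exact le_trans (csInf_le ⟨0, hSlb⟩ ⟨R, hRcpt, hRcorr, hRmk, rfl⟩) hdR
    have h2m : sInf S ≤ 2 * m := by
      refine le_of_forall_pos_le_add (fun η hη => ?_)
      have := key (m + η / 2) (by linarith)
      linarith
    linarith
  rw [markedGHDist]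
  exact le_antisymm hle' hge
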